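/- For probability vectors p, q in ℝ^d with TV(p,q) ≤ ε, the min-entropies satisfy |H_∞(p) − H_∞(q)| ≤ log₂(1 + ε·d), and this bound is tight: it is attained for p = (1/d + ε, 1/d, ..., 1/d, 1/d − ε) and q = u the uniform distribution (for ε ≤ 1/d). -/

import Mathlib

open Finset Real

/-- Tight uniform continuity bound for the min-entropy:
`|H_∞(p) - H_∞(q)| ≤ log₂(1 + ε d)` whenever `TV(p,q) ≤ ε`, with equality attained
(for `ε ≤ 1/d`) by `p = (1/d + ε, 1/d, …, 1/d, 1/d - ε)` and `q` uniform. -/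
theorem stmt8 {d : ℕ} (hd : 2 ≤ d) (ε : ℝ) (hε0 : 0 ≤ ε)
    (Hinf : (Fin d → ℝ) → ℝ)
    (hHinf : ∀ p, Hinf p =
      -Real.logb 2 (Finset.univ.sup' (Finset.univ_nonempty_iff.mpr ⟨⟨0, by omega⟩⟩) p)) :
    (∀ p q : Fin d → ℝ,
        ((∀ i, 0 ≤ p i) ∧ ∑ i, p i = 1) → ((∀ i, 0 ≤ q i) ∧ ∑ i, q i = 1) →
        (1 / 2) * ∑ i, |p i - q i| ≤ ε →
        |Hinf p - Hinf q| ≤ Real.logb 2 (1 + ε * d)) ∧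
      (ε ≤ 1 / d →
        ∀ p u : Fin d → ℝ,
        (p = fun i : Fin d => if (i : ℕ) = 0 then 1 / d + ε
            else if (i : ℕ) = d - 1 then 1 / d - ε else 1 / d) →
        (u = fun _ => (1 : ℝ) / d) →
        |Hinf p - Hinf u| = Real.logb 2 (1 + ε * d) ∧
          (1 / 2) * ∑ i, |p i - u i| = ε) := by
  have hne : (Finset.univ : Finset (Fin d)).Nonempty :=
    Finset.univ_nonempty_iff.mpr ⟨⟨0, by omega⟩⟩
  have hdpos : (0:ℝ) < d := by exact_mod_cast (by omega : 0 < d)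
  set M : (Fin d → ℝ) → ℝ := fun p => Finset.univ.sup' hne p with hMdef
  have hHinf' : ∀ p, Hinf p = -Real.logb 2 (M p) := fun p => hHinf p
  have h1ε : (0:ℝ) < 1 + ε * d := by nlinarith
  have hMge : ∀ p : Fin d → ℝ, ∑ i, p i = 1 → 1 ≤ (d:ℝ) * M p := by
    intro p hsum
    have h1 : ∑ i, p i ≤ ∑ _i : Fin d, M p :=
      Finset.sum_le_sum fun i _ => Finset.le_sup' p (Finset.mem_univ i)
    rw [hsum] at h1
    simpa [mul_comm] using h1
  have hMpos : ∀ p : Fin d → ℝ, ∑ i, p i = 1 → 0 < M p := by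
    intro p hsum
    nlinarith [hMge p hsum]
  have hkey : ∀ p q : Fin d → ℝ,
      (∑ i, p i = 1) → (∑ i, q i = 1) →
      (1 / 2) * ∑ i, |p i - q i| ≤ ε → M q ≤ M p * (1 + ε * d) := by
    intro p q hps hqs htv
    obtain ⟨i, -, hi⟩ := Finset.exists_mem_eq_sup' hne q
    have hdiff : q i - p i ≤ ε := by
      have hsum0 : ∑ j, (q j - p j) = 0 := by
        rw [Finset.sum_sub_distrib, hps, hqs]; ring
      have e0 := Finset.add_sum_erase Finset.univ (fun j => q j - p j)
        (Finset.mem_univ i)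
      rw [hsum0] at e0
      have e2 : ∑ j ∈ Finset.univ.erase i, -(q j - p j)
          ≤ ∑ j ∈ Finset.univ.erase i, |p j - q j| :=
        Finset.sum_le_sum fun j _ => by
          rw [abs_sub_comm]; exact neg_le_abs _
      rw [Finset.sum_neg_distrib] at e2
      have e3 : q i - p i ≤ |p i - q i| := by
        have := neg_abs_le (p i - q i); linarith
      have e4 := Finset.add_sum_erase Finset.univ (fun j => |p j - q j|)
        (Finset.mem_univ i)
      linarith
    have hle1 : M q ≤ M p + ε := by
      have : p i ≤ M p := Finset.le_sup' p (Finset.mem_univ i)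
      linarith [hi ▸ hdiff]
    nlinarith [hMge p hps, hle1]
  constructor
  · intro p q ⟨hp1, hp2⟩ ⟨hq1, hq2⟩ htv
    have hMp := hMpos p hp2
    have hMq := hMpos q hq2
    have htv' : (1 / 2) * ∑ i, |q i - p i| ≤ ε := by
      simpa [abs_sub_comm] using htv
    have h1 := hkey p q hp2 hq2 htv
    have h2 := hkey q p hq2 hp2 htv'
    rw [hHinf' p, hHinf' q]
    have hlog : ∀ a b : ℝ, 0 < a → 0 < b → b ≤ a * (1 + ε * d) →
        Real.logb 2 b - Real.logb 2 a ≤ Real.logb 2 (1 + ε * d) := by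
      intro a b ha hb hab
      have : Real.logb 2 b ≤ Real.logb 2 (a * (1 + ε * d)) :=
        Real.logb_le_logb_of_le one_lt_two hb hab
      rw [Real.logb_mul (ne_of_gt ha) (ne_of_gt h1ε)] at this
      linarith
    rw [abs_sub_le_iff]
    constructor
    · have := hlog (M p) (M q) hMp hMq h1
      linarith
    · have := hlog (M q) (M p) hMq hMp h2
      linarith
  · intro hεd p u hpdef hudef
    subst hpdef hudef
    have h0d : ((⟨0, by omega⟩ : Fin d) : ℕ) = 0 := rfl
    have hMu : M (fun _ => (1:ℝ)/d) = 1/d := Finset.sup'_const hne _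
    have hMp : M (fun i : Fin d => if (i : ℕ) = 0 then 1 / d + ε
        else if (i : ℕ) = d - 1 then 1 / d - ε else 1 / d) = 1/d + ε := by
      apply le_antisymm
      · apply Finset.sup'_le
        intro i _
        split_ifs <;> linarith
      · refine (Finset.le_sup'_iff hne).mpr ⟨⟨0, by omega⟩, Finset.mem_univ _, ?_⟩
        simp
    have h1d : (0:ℝ) < 1/d := by positivity
    have hprod : (1/(d:ℝ)) * (1 + ε * d) = 1/d + ε := by
      field_simp
    constructor
    · rw [hHinf' _, hHinf' _, hMu, hMp, ← hprod,
        Real.logb_mul (ne_of_gt h1d) (ne_of_gt h1ε)]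
      have hnn : 0 ≤ Real.logb 2 (1 + ε * d) :=
        Real.logb_nonneg one_lt_two (by nlinarith)
      rw [show -(Real.logb 2 (1/(d:ℝ)) + Real.logb 2 (1 + ε * d)) -
          -Real.logb 2 (1/(d:ℝ)) = -(Real.logb 2 (1 + ε * d)) by ring,
        abs_neg, abs_of_nonneg hnn]
    · have hsplit : ∀ i : Fin d,
          |(if (i : ℕ) = 0 then 1 / (d:ℝ) + ε
            else if (i : ℕ) = d - 1 then 1 / d - ε else 1 / d) - 1/d|
          = (if (i : ℕ) = 0 then ε else 0) + (if (i : ℕ) = d - 1 then ε else 0) := by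
        intro i
        by_cases h0 : (i : ℕ) = 0
        · have hne1 : (i : ℕ) ≠ d - 1 := by omega
          rw [if_pos h0, if_pos h0, if_neg hne1,
            show (1:ℝ)/d + ε - 1/d = ε by ring, abs_of_nonneg hε0, add_zero]
        · by_cases h1 : (i : ℕ) = d - 1
          · rw [if_neg h0, if_neg h0, if_pos h1, if_pos h1,
              show (1:ℝ)/d - ε - 1/d = -ε by ring, abs_neg, abs_of_nonneg hε0,
              zero_add]
          · simp [h0, h1]
      calc (1/2) * ∑ i : Fin d, |(if (i : ℕ) = 0 then 1 / (d:ℝ) + ε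
            else if (i : ℕ) = d - 1 then 1 / d - ε else 1 / d) - 1/d|
          = (1/2) * ∑ i : Fin d, ((if (i : ℕ) = 0 then ε else 0)
              + (if (i : ℕ) = d - 1 then ε else 0)) := by
            rw [Finset.sum_congr rfl (fun i _ => hsplit i)]
        _ = (1/2) * ((∑ i : Fin d, if (i : ℕ) = 0 then ε else 0)
              + ∑ i : Fin d, if (i : ℕ) = d - 1 then ε else 0) := by
            rw [Finset.sum_add_distrib]
        _ = ε := by
            rw [Fin.sum_univ_eq_sum_range (fun n => if n = 0 then ε else 0),
              Fin.sum_univ_eq_sum_range (fun n => if n = d - 1 then ε else 0),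
              Finset.sum_ite_eq' (Finset.range d) 0 (fun _ => ε),
              Finset.sum_ite_eq' (Finset.range d) (d-1) (fun _ => ε)]
            simp only [Finset.mem_range]
            rw [if_pos (by omega), if_pos (by omega)]
            ring
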